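/- For every real sequence (β_t)_{t=0}^∞ with Σ_{t=0}^∞ β_t² < ∞ and every real constant c with 0 ≤ c < 1, one has Σ_{t=0}^∞ Σ_{τ=0}^∞ β_t β_τ c^{|t−τ|} ≤ ((1 + c)/(1 − c)) · Σ_{t=0}^∞ β_t². -/

import Mathlib

set_option maxHeartbeats 1000000

private lemma natAbs_sub_comm' (a b : ℤ) : (a - b).natAbs = (b - a).natAbs := by omega

private lemma abs_mul_le_half (a b : ℝ) : |a * b| ≤ (a ^ 2 + b ^ 2) / 2 := by
  rw [abs_le]
  constructor <;> nlinarith [sq_nonneg (a - b), sq_nonneg (a + b)]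

section kern

variable {c : ℝ} (hc0 : 0 ≤ c) (hc1 : c < 1)

include hc0 hc1 in
private lemma summable_kern (t : ℕ) :
    Summable fun τ : ℕ => c ^ ((t : ℤ) - (τ : ℤ)).natAbs := by
  have hmaj : Summable fun τ : ℕ => c ^ (τ - t) := by
    refine (summable_nat_add_iff t).mp ?_
    simpa using summable_geometric_of_lt_one hc0 hc1
  refine hmaj.of_nonneg_of_le (fun τ => pow_nonneg hc0 _) (fun τ => ?_)
  rcases le_or_gt t τ with h | h
  · have : ((t : ℤ) - (τ : ℤ)).natAbs = τ - t := by omega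
    rw [this]
  · have h0 : τ - t = 0 := by omega
    rw [h0, pow_zero]
    exact pow_le_one₀ hc0 hc1.le

include hc0 hc1 in
private lemma tsum_kern_le (t : ℕ) :
    (∑' τ : ℕ, c ^ ((t : ℤ) - (τ : ℤ)).natAbs) ≤ (1 + c) / (1 - c) := by
  have hpos : 0 < 1 - c := by linarith
  have hsplit := Summable.sum_add_tsum_nat_add (f := fun τ : ℕ => c ^ ((t : ℤ) - (τ : ℤ)).natAbs) t
    (summable_kern hc0 hc1 t)
  rw [← hsplit]
  have h2 : (∑' i : ℕ, c ^ ((t : ℤ) - ((i + t : ℕ) : ℤ)).natAbs) = (1 - c)⁻¹ := by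
    have : ∀ i : ℕ, ((t : ℤ) - ((i + t : ℕ) : ℤ)).natAbs = i := by intro i; omega
    simp only [this]
    exact tsum_geometric_of_lt_one hc0 hc1
  rw [h2]
  have h1 : (∑ i ∈ Finset.range t, c ^ ((t : ℤ) - (i : ℤ)).natAbs)
      ≤ c * (1 - c)⁻¹ := by
    have heq : (∑ i ∈ Finset.range t, c ^ ((t : ℤ) - (i : ℤ)).natAbs)
        = ∑ j ∈ Finset.range t, c * c ^ j := by
      rw [← Finset.sum_range_reflect (fun i => c ^ ((t : ℤ) - (i : ℤ)).natAbs) t]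
      refine Finset.sum_congr rfl fun j hj => ?_
      have hj' : j < t := Finset.mem_range.mp hj
      have : ((t : ℤ) - ((t - 1 - j : ℕ) : ℤ)).natAbs = j + 1 := by omega
      rw [this, pow_succ, mul_comm]
    rw [heq, ← Finset.mul_sum]
    have hle : (∑ j ∈ Finset.range t, c ^ j) ≤ (1 - c)⁻¹ := by
      have := Summable.sum_le_tsum (Finset.range t) (fun i _ => pow_nonneg hc0 i)
        (summable_geometric_of_lt_one hc0 hc1)
      rwa [tsum_geometric_of_lt_one hc0 hc1] at this
    exact mul_le_mul_of_nonneg_left hle hc0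
  calc (∑ i ∈ Finset.range t, c ^ ((t : ℤ) - (i : ℤ)).natAbs) + (1 - c)⁻¹
      ≤ c * (1 - c)⁻¹ + (1 - c)⁻¹ := by linarith
    _ = (1 + c) / (1 - c) := by field_simp; ring

end kern

theorem double_series_le (β : ℕ → ℝ) (hβ : Summable fun t => β t ^ 2)
    (c : ℝ) (hc0 : 0 ≤ c) (hc1 : c < 1) :
    (∑' t : ℕ, ∑' τ : ℕ, β t * β τ * c ^ ((t : ℤ) - (τ : ℤ)).natAbs)
      ≤ ((1 + c) / (1 - c)) * ∑' t : ℕ, β t ^ 2 := by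
  have hpos : 0 < 1 - c := by linarith
  set K : ℝ := (1 + c) / (1 - c) with hK
  have hK0 : 0 ≤ K := div_nonneg (by linarith) hpos.le
  set k : ℕ → ℕ → ℝ := fun t τ => c ^ ((t : ℤ) - (τ : ℤ)).natAbs with hkdef
  have hksymm : ∀ t τ, k t τ = k τ t := by
    intro t τ; simp only [hkdef, natAbs_sub_comm']
  have hknn : ∀ t τ, 0 ≤ k t τ := fun t τ => pow_nonneg hc0 _
  have hksum : ∀ t, Summable (k t) := summable_kern hc0 hc1
  have hktsum : ∀ t, (∑' τ, k t τ) ≤ K := tsum_kern_le hc0 hc1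
  set S : ℝ := ∑' t, β t ^ 2 with hS
  -- majorant m
  set m : ℕ → ℕ → ℝ := fun t τ => (β t ^ 2 + β τ ^ 2) / 2 * k t τ with hmdef
  have hmnn : ∀ t τ, 0 ≤ m t τ := fun t τ =>
    mul_nonneg (by positivity) (hknn t τ)
  have hfm : ∀ t τ, |β t * β τ * k t τ| ≤ m t τ := by
    intro t τ
    rw [abs_mul, abs_of_nonneg (hknn t τ)]
    exact mul_le_mul_of_nonneg_right (abs_mul_le_half _ _) (hknn t τ)
  -- summability of m t
  have hm1 : ∀ t, Summable fun τ => β t ^ 2 / 2 * k t τ := fun t => (hksum t).mul_left _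
  have hm2 : ∀ t, Summable fun τ => β τ ^ 2 / 2 * k t τ := by
    intro t
    refine Summable.of_nonneg_of_le (fun τ => mul_nonneg (by positivity) (hknn t τ))
      (fun τ => ?_) (hβ.div_const 2)
    calc β τ ^ 2 / 2 * k t τ ≤ β τ ^ 2 / 2 * 1 :=
          mul_le_mul_of_nonneg_left (pow_le_one₀ hc0 hc1.le) (by positivity)
      _ = β τ ^ 2 / 2 := mul_one _
  have hmeq : ∀ t τ, m t τ = β t ^ 2 / 2 * k t τ + β τ ^ 2 / 2 * k t τ := by
    intro t τ; simp only [hmdef]; ring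
  have hmsum : ∀ t, Summable (m t) := by
    intro t
    exact Summable.congr ((hm1 t).add (hm2 t)) fun τ => (hmeq t τ).symm
  -- summability of f t
  have hfsum : ∀ t, Summable fun τ => β t * β τ * k t τ := by
    intro t
    exact Summable.of_norm_bounded (g := m t) (hmsum t) fun τ => by
      rw [Real.norm_eq_abs]; exact hfm t τ
  -- inner bound
  have hinner : ∀ t, (∑' τ, β t * β τ * k t τ) ≤ ∑' τ, m t τ := by
    intro t
    exact Summable.tsum_le_tsum (fun τ => (le_abs_self _).trans (hfm t τ)) (hfsum t) (hmsum t)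
  -- Fubini setup : G (τ, t) = β τ ^2/2 * k τ t
  set G : ℕ × ℕ → ℝ := fun p => β p.1 ^ 2 / 2 * k p.1 p.2 with hGdef
  have hGnn : 0 ≤ G := fun p => mul_nonneg (by positivity) (hknn _ _)
  have hGsum : Summable G := by
    rw [summable_prod_of_nonneg hGnn]
    constructor
    · intro τ; simp only [hGdef]; exact (hksum τ).mul_left _
    · refine Summable.of_nonneg_of_le
        (fun τ => tsum_nonneg fun t => mul_nonneg (by positivity) (hknn _ _))
        (fun τ => ?_) ((hβ.div_const 2).mul_right K)
      simp only [hGdef]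
      rw [tsum_mul_left]
      exact mul_le_mul_of_nonneg_left (hktsum τ) (by positivity)
  have hHval : ∀ t, (∑' τ, β τ ^ 2 / 2 * k t τ) = ∑' τ, G (τ, t) := by
    intro t
    refine tsum_congr fun τ => ?_
    simp only [hGdef]
    rw [hksymm t τ]
  have hGswap : Summable fun p : ℕ × ℕ => G p.swap := hGsum.prod_symm
  have hHsum : Summable fun t => ∑' τ, β τ ^ 2 / 2 * k t τ := by
    have h := ((summable_prod_of_nonneg (f := fun p : ℕ × ℕ => G p.swap)
      (fun p => hGnn p.swap)).mp hGswap).2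
    refine Summable.congr h fun t => ?_
    rw [hHval t]
    exact tsum_congr fun y => rfl
  have hHtsum : (∑' t, ∑' τ, β τ ^ 2 / 2 * k t τ) ≤ K * (S / 2) := by
    have e1 : (∑' t, ∑' τ, β τ ^ 2 / 2 * k t τ) = ∑' p : ℕ × ℕ, G p.swap := by
      rw [Summable.tsum_prod' hGswap (fun t => (hm2 t).congr fun y => by simp only [hGdef, Prod.swap_prod_mk]; rw [hksymm t y])]
      refine tsum_congr fun t => (hHval t).trans (tsum_congr fun y => rfl)
    have e2 : (∑' p : ℕ × ℕ, G p.swap) = ∑' p : ℕ × ℕ, G p :=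
      (Equiv.prodComm ℕ ℕ).tsum_eq G
    rw [e1, e2, Summable.tsum_prod' hGsum hGsum.prod_factor]
    have e3 : ∀ τ : ℕ, (∑' t, G (τ, t)) = β τ ^ 2 / 2 * ∑' t, k τ t := by
      intro τ; simp only [hGdef]; exact tsum_mul_left
    calc (∑' τ, ∑' t, G (τ, t)) = ∑' τ, β τ ^ 2 / 2 * ∑' t, k τ t :=
          tsum_congr e3
      _ ≤ ∑' τ, β τ ^ 2 / 2 * K := by
          refine Summable.tsum_le_tsum (fun τ => mul_le_mul_of_nonneg_left (hktsum τ) (by positivity))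
            ?_ ((hβ.div_const 2).mul_right K)
          refine Summable.congr ((summable_prod_of_nonneg hGnn).mp hGsum).2 fun τ => ?_
          exact e3 τ
      _ = K * (S / 2) := by
          rw [tsum_mul_right, ← tsum_div_const]
          ring
  -- sum over t of the m-sums
  have hMeq : ∀ t, (∑' τ, m t τ)
      = β t ^ 2 / 2 * (∑' τ, k t τ) + ∑' τ, β τ ^ 2 / 2 * k t τ := by
    intro t
    rw [tsum_congr (hmeq t), Summable.tsum_add (hm1 t) (hm2 t), tsum_mul_left]
  have hsum1 : Summable fun t => β t ^ 2 / 2 * (∑' τ, k t τ) := by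
    refine Summable.of_nonneg_of_le
      (fun t => mul_nonneg (by positivity) (tsum_nonneg (hknn t)))
      (fun t => mul_le_mul_of_nonneg_left (hktsum t) (by positivity))
      ((hβ.div_const 2).mul_right K)
  have hfin1 : (∑' t, β t ^ 2 / 2 * (∑' τ, k t τ)) ≤ K * (S / 2) := by
    calc (∑' t, β t ^ 2 / 2 * (∑' τ, k t τ)) ≤ ∑' t, β t ^ 2 / 2 * K :=
          Summable.tsum_le_tsum (fun t => mul_le_mul_of_nonneg_left (hktsum t) (by positivity))
            hsum1 ((hβ.div_const 2).mul_right K)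
      _ = K * (S / 2) := by rw [tsum_mul_right, ← tsum_div_const]; ring
  have hMsum : Summable fun t => ∑' τ, m t τ := by
    refine Summable.congr (hsum1.add hHsum) fun t => (hMeq t).symm
  -- outer summability of f-sums
  have hfabs : ∀ t, Summable fun τ => |β t * β τ * k t τ| := by
    intro t
    exact Summable.of_nonneg_of_le (fun τ => abs_nonneg _) (hfm t) (hmsum t)
  have hfouter : Summable fun t => ∑' τ, β t * β τ * k t τ := by
    refine Summable.of_norm_bounded (g := fun t => ∑' τ, m t τ) hMsum fun t => ?_
    calc ‖∑' τ, β t * β τ * k t τ‖ ≤ ∑' τ, ‖β t * β τ * k t τ‖ :=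
          norm_tsum_le_tsum_norm ((hfabs t).congr fun τ => (Real.norm_eq_abs _).symm)
      _ ≤ ∑' τ, m t τ := by
          refine Summable.tsum_le_tsum (fun τ => ?_)
            ((hfabs t).congr fun τ => (Real.norm_eq_abs _).symm) (hmsum t)
          rw [Real.norm_eq_abs]; exact hfm t τ
  -- conclusion
  calc (∑' t, ∑' τ, β t * β τ * k t τ) ≤ ∑' t, ∑' τ, m t τ :=
        Summable.tsum_le_tsum hinner hfouter hMsum
    _ = (∑' t, β t ^ 2 / 2 * (∑' τ, k t τ)) + ∑' t, ∑' τ, β τ ^ 2 / 2 * k t τ := by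
        rw [tsum_congr hMeq, Summable.tsum_add hsum1 hHsum]
    _ ≤ K * (S / 2) + K * (S / 2) := add_le_add hfin1 hHtsum
    _ = K * S := by ring
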